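/- Let μ be a real number and m ≥ 1 an integer. Then the following Pochhammer product identity holds (in denominator-cleared form): 2^{(m−1)(m−2)/2} · ( ∏_{i=1}^{⌊m/2⌋} (μ/2+3i−1/2)_{m−2i} · (μ/2+2m−i)_{m−2i+1} ) · ∏_{i=1}^{m−1} (μ/2+i+1)_{i−1} = ∏_{i=1}^{m−1} [ (μ+2i+1)_{i−1} · (μ/2+2i+1)_i ]. -/

import Mathlib

open Finset

/-- The rising factorial (Pochhammer symbol) `(a)_b = a(a+1)⋯(a+b-1)`. -/
noncomputable def poch (a : ℝ) (b : ℕ) : ℝ := (ascPochhammer ℝ b).eval a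

lemma poch_prod (a : ℝ) (b : ℕ) : poch a b = ∏ j ∈ Finset.range b, (a + j) := by
  induction b with
  | zero => simp [poch]
  | succ n ih =>
    rw [poch, ascPochhammer_succ_right, Finset.prod_range_succ, ← ih, poch]
    simp

lemma prod_swap_lemma (f : ℕ → ℝ) (s : Finset ℕ) (off st len : ℕ → ℕ) (N : ℕ)
    (hst : ∀ i ∈ s, 1 ≤ st i) (hN : ∀ i ∈ s, off i + st i * len i ≤ N) :
    ∏ i ∈ s, ∏ j ∈ Finset.range (len i), f (off i + st i * j)
      = ∏ d ∈ Finset.range N,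
          f d ^ (s.filter (fun i => ∃ j < len i, off i + st i * j = d)).card := by
  classical
  have key : ∀ i ∈ s, ∏ j ∈ Finset.range (len i), f (off i + st i * j)
      = ∏ d ∈ Finset.range N, if ∃ j < len i, off i + st i * j = d then f d else 1 := by
    intro i hi
    have himg : (Finset.range N).filter (fun d => ∃ j < len i, off i + st i * j = d)
        = (Finset.range (len i)).image (fun j => off i + st i * j) := by
      ext d
      simp only [Finset.mem_filter, Finset.mem_range, Finset.mem_image]
      constructor
      · rintro ⟨-, j, hj, rfl⟩; exact ⟨j, hj, rfl⟩
      · rintro ⟨j, hj, rfl⟩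
        refine ⟨?_, j, hj, rfl⟩
        have h1 : st i * (j + 1) ≤ st i * len i := Nat.mul_le_mul_left _ hj
        have h2 : st i * (j + 1) = st i * j + st i := by ring
        have h3 := hN i hi
        have h4 := hst i hi
        omega
    rw [← Finset.prod_filter, himg, Finset.prod_image]
    intro a ha b hb hab
    have h4 := hst i hi
    exact Nat.eq_of_mul_eq_mul_left (by omega) (by simp only at hab; omega : st i * a = st i * b)
  rw [Finset.prod_congr rfl key, Finset.prod_comm]
  refine Finset.prod_congr rfl fun d hd => ?_
  rw [Finset.prod_ite, Finset.prod_const, Finset.prod_const_one, mul_one]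

set_option maxHeartbeats 2000000 in
lemma count_key (m d : ℕ) (hm : 1 ≤ m) :
    ((Finset.Icc 1 (m/2)).filter (fun i => ∃ j < m - 2*i, 6*i - 1 + 2*j = d)).card
      + ((Finset.Icc 1 (m/2)).filter (fun i => ∃ j < m - 2*i + 1, 4*m - 2*i + 2*j = d)).card
      + ((Finset.Icc 1 (m-1)).filter (fun i => ∃ j < i - 1, 2*i + 2 + 2*j = d)).card
    = ((Finset.Icc 1 (m-1)).filter (fun i => ∃ j < i - 1, 2*i + 1 + 1*j = d)).card
      + ((Finset.Icc 1 (m-1)).filter (fun i => ∃ j < i, 4*i + 2 + 2*j = d)).card := by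
  classical
  rcases Nat.even_or_odd d with ⟨e, rfl⟩ | ⟨e, rfl⟩
  · -- even d = e + e
    have hA : ((Finset.Icc 1 (m/2)).filter (fun i => ∃ j < m - 2*i, 6*i - 1 + 2*j = e + e)) = ∅ := by
      refine Finset.filter_eq_empty_iff.mpr ?_
      rintro i hi ⟨j, hj, hje⟩
      simp only [Finset.mem_Icc] at hi
      omega
    have hB : ((Finset.Icc 1 (m/2)).filter (fun i => ∃ j < m - 2*i + 1, 4*m - 2*i + 2*j = e + e))
        = Finset.Icc (max 1 (2*m - e)) (min (m/2) ((3*m - e)/3)) := by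
      ext i
      simp only [Finset.mem_filter, Finset.mem_Icc]
      constructor
      · rintro ⟨⟨hi1, hi2⟩, j, hj, hje⟩
        omega
      · rintro ⟨h1, h2⟩
        exact ⟨⟨by omega, by omega⟩, e + i - 2*m, by omega, by omega⟩
    have hC : ((Finset.Icc 1 (m-1)).filter (fun i => ∃ j < i - 1, 2*i + 2 + 2*j = e + e))
        = Finset.Icc (max 1 ((e+2)/2)) (min (m-1) (e-1)) := by
      ext i
      simp only [Finset.mem_filter, Finset.mem_Icc]
      constructor
      · rintro ⟨⟨hi1, hi2⟩, j, hj, hje⟩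
        omega
      · rintro ⟨h1, h2⟩
        exact ⟨⟨by omega, by omega⟩, e - i - 1, by omega, by omega⟩
    have hD : ((Finset.Icc 1 (m-1)).filter (fun i => ∃ j < i - 1, 2*i + 1 + 1*j = e + e))
        = Finset.Icc (max 1 ((2*e+3)/3)) (min (m-1) (e-1)) := by
      ext i
      simp only [Finset.mem_filter, Finset.mem_Icc]
      constructor
      · rintro ⟨⟨hi1, hi2⟩, j, hj, hje⟩
        omega
      · rintro ⟨h1, h2⟩
        exact ⟨⟨by omega, by omega⟩, e + e - 2*i - 1, by omega, by omega⟩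
    have hE : ((Finset.Icc 1 (m-1)).filter (fun i => ∃ j < i, 4*i + 2 + 2*j = e + e))
        = Finset.Icc (max 1 ((e+2)/3)) (min (m-1) ((e-1)/2)) := by
      ext i
      simp only [Finset.mem_filter, Finset.mem_Icc]
      constructor
      · rintro ⟨⟨hi1, hi2⟩, j, hj, hje⟩
        omega
      · rintro ⟨h1, h2⟩
        exact ⟨⟨by omega, by omega⟩, e - 2*i - 1, by omega, by omega⟩
    rw [hA, hB, hC, hD, hE]
    simp only [Finset.card_empty, Nat.card_Icc]
    obtain ⟨q, r, hr, rfl⟩ : ∃ q r, r < 6 ∧ e = 6*q + r :=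
      ⟨e/6, e % 6, Nat.mod_lt _ (by norm_num), by omega⟩
    interval_cases r <;> omega
  · -- odd d = 2*e + 1
    have hB : ((Finset.Icc 1 (m/2)).filter (fun i => ∃ j < m - 2*i + 1, 4*m - 2*i + 2*j = 2*e + 1)) = ∅ := by
      refine Finset.filter_eq_empty_iff.mpr ?_
      rintro i hi ⟨j, hj, hje⟩
      simp only [Finset.mem_Icc] at hi
      omega
    have hC : ((Finset.Icc 1 (m-1)).filter (fun i => ∃ j < i - 1, 2*i + 2 + 2*j = 2*e + 1)) = ∅ := by
      refine Finset.filter_eq_empty_iff.mpr ?_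
      rintro i hi ⟨j, hj, hje⟩
      omega
    have hE : ((Finset.Icc 1 (m-1)).filter (fun i => ∃ j < i, 4*i + 2 + 2*j = 2*e + 1)) = ∅ := by
      refine Finset.filter_eq_empty_iff.mpr ?_
      rintro i hi ⟨j, hj, hje⟩
      omega
    have hA : ((Finset.Icc 1 (m/2)).filter (fun i => ∃ j < m - 2*i, 6*i - 1 + 2*j = 2*e + 1))
        = Finset.Icc (max 1 (e + 2 - m)) (min (m/2) ((e+1)/3)) := by
      ext i
      simp only [Finset.mem_filter, Finset.mem_Icc]
      constructor
      · rintro ⟨⟨hi1, hi2⟩, j, hj, hje⟩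
        omega
      · rintro ⟨h1, h2⟩
        exact ⟨⟨by omega, by omega⟩, e + 1 - 3*i, by omega, by omega⟩
    have hD : ((Finset.Icc 1 (m-1)).filter (fun i => ∃ j < i - 1, 2*i + 1 + 1*j = 2*e + 1))
        = Finset.Icc (max 1 ((2*e+4)/3)) (min (m-1) e) := by
      ext i
      simp only [Finset.mem_filter, Finset.mem_Icc]
      constructor
      · rintro ⟨⟨hi1, hi2⟩, j, hj, hje⟩
        omega
      · rintro ⟨h1, h2⟩
        exact ⟨⟨by omega, by omega⟩, 2*e - 2*i, by omega, by omega⟩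
    rw [hA, hB, hC, hD, hE]
    simp only [Finset.card_empty, Nat.card_Icc]
    omega


lemma sum_aux (n : ℕ) : ∑ i ∈ Finset.Icc 1 n, (i-1) = n*(n-1)/2 := by
  induction n with
  | zero => simp
  | succ k ih =>
    rw [Finset.sum_Icc_succ_top (by omega), ih]
    have h : (k+1)*(k+1-1) = k*(k-1) + 2*k := by
      cases k with
      | zero => simp
      | succ t =>
        simp only [Nat.add_sub_cancel]
        ring
    omega

/-- A Pochhammer product identity (denominator-cleared form of Lemma `CancelPoch`). -/
theorem cancel_poch (μ : ℝ) (m : ℕ) (hm : 1 ≤ m) :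
    2 ^ ((m - 1) * (m - 2) / 2) *
        (∏ i ∈ Finset.Icc 1 (m / 2),
          (poch (μ / 2 + 3 * i - 1 / 2) (m - 2 * i) *
            poch (μ / 2 + 2 * m - i) (m - 2 * i + 1))) *
        ∏ i ∈ Finset.Icc 1 (m - 1), poch (μ / 2 + i + 1) (i - 1) =
      ∏ i ∈ Finset.Icc 1 (m - 1),
        (poch (μ + 2 * i + 1) (i - 1) * poch (μ / 2 + 2 * i + 1) i) := by
  classical
  set f : ℕ → ℝ := fun d => μ/2 + (d:ℝ)/2 with hf
  -- conversions of the five families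
  have hA : ∏ i ∈ Finset.Icc 1 (m/2), poch (μ/2 + 3*i - 1/2) (m - 2*i)
      = ∏ i ∈ Finset.Icc 1 (m/2), ∏ j ∈ Finset.range (m - 2*i), f (6*i - 1 + 2*j) := by
    refine Finset.prod_congr rfl fun i hi => ?_
    simp only [Finset.mem_Icc] at hi
    rw [poch_prod]
    refine Finset.prod_congr rfl fun j hj => ?_
    have h1 : (1:ℕ) ≤ 6*i := by omega
    simp only [hf]
    push_cast [h1]
    ring
  have hB : ∏ i ∈ Finset.Icc 1 (m/2), poch (μ/2 + 2*m - i) (m - 2*i + 1)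
      = ∏ i ∈ Finset.Icc 1 (m/2), ∏ j ∈ Finset.range (m - 2*i + 1), f (4*m - 2*i + 2*j) := by
    refine Finset.prod_congr rfl fun i hi => ?_
    simp only [Finset.mem_Icc] at hi
    rw [poch_prod]
    refine Finset.prod_congr rfl fun j hj => ?_
    have h1 : 2*i ≤ 4*m := by omega
    simp only [hf]
    push_cast [h1]
    ring
  have hC : ∏ i ∈ Finset.Icc 1 (m-1), poch (μ/2 + i + 1) (i - 1)
      = ∏ i ∈ Finset.Icc 1 (m-1), ∏ j ∈ Finset.range (i - 1), f (2*i + 2 + 2*j) := by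
    refine Finset.prod_congr rfl fun i hi => ?_
    rw [poch_prod]
    refine Finset.prod_congr rfl fun j hj => ?_
    simp only [hf]
    push_cast
    ring
  have hD : ∏ i ∈ Finset.Icc 1 (m-1), poch (μ + 2*i + 1) (i - 1)
      = (2:ℝ) ^ ((m-1)*(m-2)/2) *
        ∏ i ∈ Finset.Icc 1 (m-1), ∏ j ∈ Finset.range (i - 1), f (2*i + 1 + 1*j) := by
    have step : ∀ i ∈ Finset.Icc 1 (m-1), poch (μ + 2*i + 1) (i - 1)
        = (2:ℝ)^(i-1) * ∏ j ∈ Finset.range (i - 1), f (2*i + 1 + 1*j) := by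
      intro i hi
      rw [poch_prod]
      have h2 : ∀ j ∈ Finset.range (i-1), μ + 2*(i:ℝ) + 1 + j = 2 * f (2*i + 1 + 1*j) := by
        intro j hj
        simp only [hf]
        push_cast
        ring
      rw [Finset.prod_congr rfl h2, Finset.prod_mul_distrib, Finset.prod_const,
        Finset.card_range]
    rw [Finset.prod_congr rfl step, Finset.prod_mul_distrib, Finset.prod_pow_eq_pow_sum,
      sum_aux]
    have h1 : m-1-1 = m-2 := by omega
    rw [h1]
  have hE : ∏ i ∈ Finset.Icc 1 (m-1), poch (μ/2 + 2*i + 1) i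
      = ∏ i ∈ Finset.Icc 1 (m-1), ∏ j ∈ Finset.range i, f (4*i + 2 + 2*j) := by
    refine Finset.prod_congr rfl fun i hi => ?_
    rw [poch_prod]
    refine Finset.prod_congr rfl fun j hj => ?_
    simp only [hf]
    push_cast
    ring
  -- swap lemma applications
  have sA := prod_swap_lemma f (Finset.Icc 1 (m/2)) (fun i => 6*i - 1) (fun _ => 2)
      (fun i => m - 2*i) (6*m) (fun i _ => by norm_num)
      (fun i hi => by simp only [Finset.mem_Icc] at hi
                      show 6*i - 1 + 2*(m - 2*i) ≤ 6*m; omega)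
  have sB := prod_swap_lemma f (Finset.Icc 1 (m/2)) (fun i => 4*m - 2*i) (fun _ => 2)
      (fun i => m - 2*i + 1) (6*m) (fun i _ => by norm_num)
      (fun i hi => by simp only [Finset.mem_Icc] at hi
                      show 4*m - 2*i + 2*(m - 2*i + 1) ≤ 6*m; omega)
  have sC := prod_swap_lemma f (Finset.Icc 1 (m-1)) (fun i => 2*i + 2) (fun _ => 2)
      (fun i => i - 1) (6*m) (fun i _ => by norm_num)
      (fun i hi => by simp only [Finset.mem_Icc] at hi
                      show 2*i + 2 + 2*(i - 1) ≤ 6*m; omega)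
  have sD := prod_swap_lemma f (Finset.Icc 1 (m-1)) (fun i => 2*i + 1) (fun _ => 1)
      (fun i => i - 1) (6*m) (fun i _ => le_refl 1)
      (fun i hi => by simp only [Finset.mem_Icc] at hi
                      show 2*i + 1 + 1*(i - 1) ≤ 6*m; omega)
  have sE := prod_swap_lemma f (Finset.Icc 1 (m-1)) (fun i => 4*i + 2) (fun _ => 2)
      (fun i => i) (6*m) (fun i _ => by norm_num)
      (fun i hi => by simp only [Finset.mem_Icc] at hi
                      show 4*i + 2 + 2*i ≤ 6*m; omega)
  rw [Finset.prod_mul_distrib, Finset.prod_mul_distrib, hA, hB, hC, hD, hE,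
      sA, sB, sC, sD, sE]
  rw [mul_assoc, ← Finset.prod_mul_distrib, ← Finset.prod_mul_distrib,
      mul_assoc, ← Finset.prod_mul_distrib]
  congr 1
  refine Finset.prod_congr rfl fun d hd => ?_
  rw [← pow_add, ← pow_add, ← pow_add]
  congr 1
  simpa using count_key m d hm
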